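/- For every real number n > 1 and every positive integer m, (1 + n/m)^(-(m-1)/m) ≥ (1/2) · min{1, (m · n^(1/m))/(n · m^(1/m))}, and consequently (1 + n/m)^(-(m-1)/m) ≥ (1/2) · (log n)/n when n ≥ 3. -/
import Mathlib

open Real

theorem one_add_div_rpow_lower_bound (n : ℝ) (hn : 1 < n) (m : ℕ) (hm : 0 < m) :
    (1 + n / m) ^ (-(((m : ℝ) - 1) / m)) ≥
      (1 / 2) * min 1 ((m * n ^ (1 / (m : ℝ))) / (n * (m : ℝ) ^ (1 / (m : ℝ)))) ∧
    (3 ≤ n → (1 + n / m) ^ (-(((m : ℝ) - 1) / m)) ≥ (1 / 2) * (Real.log n / n)) := by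
  have hm1 : (1:ℝ) ≤ m := by exact_mod_cast hm
  have hmp : (0:ℝ) < m := by linarith
  have hn0 : (0:ℝ) < n := by linarith
  set ee : ℝ := ((m:ℝ)-1)/m with hee
  have he0 : 0 ≤ ee := div_nonneg (by linarith) hmp.le
  have he1 : ee ≤ 1 := by rw [hee, div_le_one hmp]; linarith
  have hb1 : (1:ℝ) ≤ 1 + n/m := by
    have : (0:ℝ) ≤ n/m := by positivity
    linarith
  have hbp : (0:ℝ) < 1 + n/m := by linarith
  have hrw : (1 + n / m) ^ (-ee) = ((1 + n/m) ^ ee)⁻¹ := Real.rpow_neg hbp.le ee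
  have hpowpos : 0 < (1 + n/m) ^ ee := Real.rpow_pos_of_pos hbp ee
  have hnm : 0 < n ^ (1/(m:ℝ)) := Real.rpow_pos_of_pos hn0 _
  have hmm : 0 < (m:ℝ) ^ (1/(m:ℝ)) := Real.rpow_pos_of_pos hmp _
  have h2e : (2:ℝ) ^ ee ≤ 2 := by
    calc (2:ℝ) ^ ee ≤ 2 ^ (1:ℝ) :=
      Real.rpow_le_rpow_of_exponent_le (by norm_num) he1
    _ = 2 := Real.rpow_one 2
  have key : (1 + n / m) ^ (-ee) ≥
      (1/2) * min 1 ((m * n ^ (1/(m:ℝ))) / (n * (m:ℝ) ^ (1/(m:ℝ)))) := by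
    rcases le_or_gt n m with h | h
    · have hle2 : 1 + n/m ≤ 2 := by
        have : n/m ≤ 1 := (div_le_one hmp).2 h
        linarith
      have h2 : (1 + n/m) ^ ee ≤ 2 := by
        calc (1+n/m) ^ ee ≤ 2 ^ ee := Real.rpow_le_rpow hbp.le hle2 he0
        _ ≤ 2 := h2e
      have hA : (2:ℝ)⁻¹ ≤ ((1 + n/m) ^ ee)⁻¹ := by
        apply inv_anti₀ hpowpos h2
      have hmin : min 1 ((m * n ^ (1/(m:ℝ))) / (n * (m:ℝ) ^ (1/(m:ℝ)))) ≤ 1 :=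
        min_le_left _ _
      rw [ge_iff_le, hrw]
      calc (1/2) * min 1 ((m * n ^ (1/(m:ℝ))) / (n * (m:ℝ) ^ (1/(m:ℝ)))) ≤ (1/2) * 1 := by
            apply mul_le_mul_of_nonneg_left hmin (by norm_num)
        _ = (2:ℝ)⁻¹ := by norm_num
        _ ≤ _ := hA
    · -- m < n
      have hle : 1 + n/m ≤ 2 * (n/m) := by
        have : (1:ℝ) ≤ n/m := (one_le_div hmp).2 h.le
        linarith
      have hcalc : (n/m) ^ ee = (n * (m:ℝ)^(1/(m:ℝ))) / (m * n^(1/(m:ℝ))) := by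
        have hee' : ee = 1 - 1/m := by
          rw [hee]; field_simp
        rw [hee', Real.rpow_sub (div_pos hn0 hmp), Real.rpow_one,
          Real.div_rpow hn0.le hmp.le]
        field_simp
      have h2 : (1 + n/m) ^ ee ≤ 2 * ((n * (m:ℝ)^(1/(m:ℝ))) / (m * n^(1/(m:ℝ)))) := by
        calc (1+n/m) ^ ee ≤ (2 * (n/m)) ^ ee :=
              Real.rpow_le_rpow hbp.le hle he0
          _ = 2 ^ ee * (n/m) ^ ee := Real.mul_rpow (by norm_num) (by positivity)
          _ ≤ 2 * (n/m) ^ ee := by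
              apply mul_le_mul_of_nonneg_right h2e (by positivity)
          _ = 2 * ((n * (m:ℝ)^(1/(m:ℝ))) / (m * n^(1/(m:ℝ)))) := by rw [hcalc]
      have hpos2 : 0 < 2 * ((n * (m:ℝ)^(1/(m:ℝ))) / (m * n^(1/(m:ℝ)))) := by positivity
      have hA : (2 * ((n * (m:ℝ)^(1/(m:ℝ))) / (m * n^(1/(m:ℝ)))))⁻¹ ≤ ((1 + n/m) ^ ee)⁻¹ :=
        inv_anti₀ hpowpos h2
      have hinv : (2 * ((n * (m:ℝ)^(1/(m:ℝ))) / (m * n^(1/(m:ℝ)))))⁻¹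
          = (1/2) * ((m * n ^ (1/(m:ℝ))) / (n * (m:ℝ) ^ (1/(m:ℝ)))) := by
        field_simp
      rw [ge_iff_le, hrw]
      calc (1/2) * min 1 ((m * n ^ (1/(m:ℝ))) / (n * (m:ℝ) ^ (1/(m:ℝ))))
          ≤ (1/2) * ((m * n ^ (1/(m:ℝ))) / (n * (m:ℝ) ^ (1/(m:ℝ)))) := by
            apply mul_le_mul_of_nonneg_left (min_le_right _ _) (by norm_num)
        _ = (2 * ((n * (m:ℝ)^(1/(m:ℝ))) / (m * n^(1/(m:ℝ)))))⁻¹ := hinv.symm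
        _ ≤ _ := hA
  refine ⟨key, fun hn3 => ?_⟩
  have hlogn : 0 < Real.log n := Real.log_pos hn
  -- m^{1/m} ≤ e
  have hmexp : (m:ℝ) ^ (1/(m:ℝ)) ≤ Real.exp 1 := by
    rw [Real.rpow_def_of_pos hmp]
    apply Real.exp_le_exp.2
    have hlm : Real.log m ≤ m := (Real.log_le_sub_one_of_pos hmp).trans (by linarith)
    rw [mul_one_div, div_le_one hmp]
    linarith
  -- e * log n ≤ m * n^{1/m}
  have hkey2 : Real.exp 1 * Real.log n ≤ m * n ^ (1/(m:ℝ)) := by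
    have hrw2 : n ^ (1/(m:ℝ)) = Real.exp (Real.log n / m) := by
      rw [Real.rpow_def_of_pos hn0, mul_one_div]
    set t : ℝ := Real.log n / m with ht
    have htpos : 0 < t := div_pos hlogn hmp
    have hexp : Real.exp 1 * t ≤ Real.exp t := by
      have := Real.add_one_le_exp (t - 1)
      have h2 : Real.exp (t - 1) = Real.exp t / Real.exp 1 := by
        rw [Real.exp_sub]
      rw [h2] at this
      have hE : (0:ℝ) < Real.exp 1 := Real.exp_pos 1
      rw [le_div_iff₀ hE] at this
      nlinarith
    have hmt : (m:ℝ) * t = Real.log n := by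
      rw [ht]; field_simp
    rw [hrw2]
    calc Real.exp 1 * Real.log n = m * (Real.exp 1 * t) := by rw [← hmt]; ring
      _ ≤ m * Real.exp t := by
          apply mul_le_mul_of_nonneg_left hexp hmp.le
  -- min 1 (...) ≥ log n / n
  have hminge : Real.log n / n ≤ min 1 ((m * n ^ (1/(m:ℝ))) / (n * (m:ℝ) ^ (1/(m:ℝ)))) := by
    apply le_min
    · rw [div_le_one hn0]
      have := Real.log_le_sub_one_of_pos hn0
      linarith
    · rw [div_le_div_iff₀ hn0 (by positivity)]
      have h1 : Real.log n * (m:ℝ) ^ (1/(m:ℝ)) ≤ Real.log n * Real.exp 1 :=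
        mul_le_mul_of_nonneg_left hmexp hlogn.le
      have h2 : Real.log n * Real.exp 1 ≤ m * n ^ (1/(m:ℝ)) := by
        rw [mul_comm]; exact hkey2
      calc Real.log n * (n * (m:ℝ) ^ (1/(m:ℝ))) = (Real.log n * (m:ℝ) ^ (1/(m:ℝ))) * n := by ring
        _ ≤ (m * n ^ (1/(m:ℝ))) * n := by
            apply mul_le_mul_of_nonneg_right (h1.trans h2) hn0.le
  calc (1/2) * (Real.log n / n)
      ≤ (1/2) * min 1 ((m * n ^ (1/(m:ℝ))) / (n * (m:ℝ) ^ (1/(m:ℝ)))) := by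
        apply mul_le_mul_of_nonneg_left hminge (by norm_num)
    _ ≤ (1 + n / m) ^ (-ee) := key
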